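/- Let n ≥ 1, let γ : ℝ → ℝ^{n+1} be a smooth curve that is positive locally convex on [0,1], and let M ∈ SO(n+1). Then the curve γ^{TR}(t) := J₊·M·γ(1−t) is positive locally convex on [0,1] and its Frenet frame satisfies F_{γ^{TR}}(t) = J₊·M·F_γ(1−t)·J₊ for all t ∈ [0,1]. In particular, if F_γ(0) = I and M = F_γ(1)ᵀ, then F_{γ^{TR}}(0) = I and F_{γ^{TR}}(1) = J₊·F_γ(1)ᵀ·J₊. -/

import Mathlib

open Matrix
open scoped Classical

noncomputable section

def IsSignedPerm {m : ℕ} (Q : Matrix (Fin m) (Fin m) ℝ) : Prop :=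
  (∀ i, ∃! j, Q i j ≠ 0) ∧ (∀ j, ∃! i, Q i j ≠ 0) ∧
    ∀ i j, Q i j ≠ 0 → Q i j = 1 ∨ Q i j = -1

def NE {m : ℕ} (Q : Matrix (Fin m) (Fin m) ℝ) (i j : Fin m) : ℕ :=
  (Finset.univ.filter fun p : Fin m × Fin m => p.1 < i ∧ j < p.2 ∧ Q p.1 p.2 ≠ 0).card

def SW {m : ℕ} (Q : Matrix (Fin m) (Fin m) ℝ) (i j : Fin m) : ℕ := NE Qᵀ j i

def deltaRow {m : ℕ} (Q : Matrix (Fin m) (Fin m) ℝ) (i : Fin m) : ℝ :=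
  ∑ j, Q i j * (-1 : ℝ) ^ NE Q i j

def DeltaM {m : ℕ} (Q : Matrix (Fin m) (Fin m) ℝ) : Matrix (Fin m) (Fin m) ℝ :=
  Matrix.diagonal (deltaRow Q)

def sFun {m : ℕ} (Q : Matrix (Fin m) (Fin m) ℝ) : ℝ := (DeltaM Q).trace

def Jplus (m : ℕ) : Matrix (Fin m) (Fin m) ℝ :=
  Matrix.diagonal fun i => (-1 : ℝ) ^ (i : ℕ)

def TR {m : ℕ} (Q : Matrix (Fin m) (Fin m) ℝ) : Matrix (Fin m) (Fin m) ℝ :=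
  Jplus m * Qᵀ * Jplus m

def Amat (m : ℕ) : Matrix (Fin m) (Fin m) ℝ :=
  Matrix.of fun i j => if (i : ℕ) + (j : ℕ) = m - 1 then (-1 : ℝ) ^ (i : ℕ) else 0

def AD {m : ℕ} (Q : Matrix (Fin m) (Fin m) ℝ) : Matrix (Fin m) (Fin m) ℝ :=
  (Amat m)ᵀ * Q * Amat m

def IsUpperPos {m : ℕ} (R : Matrix (Fin m) (Fin m) ℝ) : Prop :=
  (∀ i j, j < i → R i j = 0) ∧ ∀ i, 0 < R i i

def Wmat {m : ℕ} (γ : ℝ → Fin m → ℝ) (t : ℝ) : Matrix (Fin m) (Fin m) ℝ :=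
  Matrix.of fun i j => iteratedDeriv (j : ℕ) γ t i

def Wronskian {m : ℕ} (γ : ℝ → Fin m → ℝ) (t : ℝ) : ℝ := (Wmat γ t).det

def PosLocConv {m : ℕ} (γ : ℝ → Fin m → ℝ) : Prop :=
  ∀ t ∈ Set.Icc (0 : ℝ) 1, 0 < Wronskian γ t

def IsFrameAt {m : ℕ} (γ : ℝ → Fin m → ℝ) (t : ℝ) (F : Matrix (Fin m) (Fin m) ℝ) : Prop :=
  Fᵀ * F = 1 ∧ F.det = 1 ∧ ∃ R, IsUpperPos R ∧ Wmat γ t = F * R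

def IsFrenet {m : ℕ} (γ : ℝ → Fin m → ℝ) (F : ℝ → Matrix (Fin m) (Fin m) ℝ) : Prop :=
  ∀ t ∈ Set.Icc (0 : ℝ) 1, IsFrameAt γ t (F t)

def e1 {m : ℕ} : Fin m → ℝ := fun i => if (i : ℕ) = 0 then 1 else 0

def frobNorm {m : ℕ} (M : Matrix (Fin m) (Fin m) ℝ) : ℝ :=
  Real.sqrt (∑ i, ∑ j, (M i j) ^ 2)

section Aux

lemma iteratedDeriv_comp_one_sub {Fs : Type*} [NormedAddCommGroup Fs] [NormedSpace ℝ Fs]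
    (k : ℕ) (f : ℝ → Fs) (a : ℝ) :
    iteratedDeriv k (fun x => f (1 - x)) a = (-1 : ℝ) ^ k • iteratedDeriv k f (1 - a) := by
  have h1 : (fun x : ℝ => f (1 - x)) = fun x => (fun y => f (1 + y)) (-x) := by
    funext x; simp [sub_eq_add_neg]
  have h3 := iteratedDeriv_comp_neg k (fun y => f (1 + y)) a
  rw [h1, h3, iteratedDeriv_comp_const_add]; simp [sub_eq_add_neg]

lemma iteratedDeriv_mulVec {m : ℕ} (A : Matrix (Fin m) (Fin m) ℝ) (f : ℝ → Fin m → ℝ)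
    (hf : ContDiff ℝ (⊤ : ℕ∞) f) (k : ℕ) (t : ℝ) :
    iteratedDeriv k (fun x => A.mulVec (f x)) t = A.mulVec (iteratedDeriv k f t) := by
  let L : (Fin m → ℝ) →L[ℝ] (Fin m → ℝ) := LinearMap.toContinuousLinearMap A.mulVecLin
  have hL : (fun x => A.mulVec (f x)) = L ∘ f := rfl
  rw [hL, iteratedDeriv_eq_iteratedFDeriv, L.iteratedFDeriv_comp_left (hf.contDiffAt (x := t)) (by exact_mod_cast le_top)]
  rfl

lemma Jplus_transpose (m : ℕ) : (Jplus m)ᵀ = Jplus m := Matrix.diagonal_transpose _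

lemma Jplus_sq (m : ℕ) : Jplus m * Jplus m = 1 := by
  rw [Jplus, Matrix.diagonal_mul_diagonal]
  convert Matrix.diagonal_one with i
  rw [← pow_add]
  exact Even.neg_one_pow ⟨(i : ℕ), rfl⟩

lemma orth_mul {m : ℕ} {X Y : Matrix (Fin m) (Fin m) ℝ} (hX : Xᵀ * X = 1) (hY : Yᵀ * Y = 1) :
    (X * Y)ᵀ * (X * Y) = 1 := by
  rw [Matrix.transpose_mul, Matrix.mul_assoc, ← Matrix.mul_assoc Xᵀ, hX, Matrix.one_mul, hY]

lemma Jplus_orth (m : ℕ) : (Jplus m)ᵀ * Jplus m = 1 := by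
  rw [Jplus_transpose, Jplus_sq]

lemma Jplus_det_sq (m : ℕ) : (Jplus m).det * (Jplus m).det = 1 := by
  rw [← Matrix.det_mul, Jplus_sq, Matrix.det_one]

lemma isUpperPos_conj {m : ℕ} {R : Matrix (Fin m) (Fin m) ℝ} (h : IsUpperPos R) :
    IsUpperPos (Jplus m * R * Jplus m) := by
  obtain ⟨h1, h2⟩ := h
  have hd : ∀ i : Fin m, ((-1 : ℝ) ^ (i : ℕ)) * ((-1 : ℝ) ^ (i : ℕ)) = 1 := fun i => by
    rw [← pow_add]; exact Even.neg_one_pow ⟨(i : ℕ), rfl⟩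
  constructor
  · intro i j hji
    simp [Jplus, Matrix.mul_diagonal, Matrix.diagonal_mul, h1 i j hji]
  · intro i
    have : (Jplus m * R * Jplus m) i i = R i i := by
      simp only [Jplus, Matrix.mul_diagonal, Matrix.diagonal_mul]
      calc (-1 : ℝ) ^ (i : ℕ) * R i i * (-1 : ℝ) ^ (i : ℕ)
          = ((-1 : ℝ) ^ (i : ℕ) * (-1 : ℝ) ^ (i : ℕ)) * R i i := by ring
        _ = R i i := by rw [hd i, one_mul]
    rw [this]; exact h2 i

lemma Wmat_TR {m : ℕ} (A : Matrix (Fin m) (Fin m) ℝ) (γ : ℝ → Fin m → ℝ)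
    (hγ : ContDiff ℝ (⊤ : ℕ∞) γ) (t : ℝ) :
    Wmat (fun x => A.mulVec (γ (1 - x))) t = A * Wmat γ (1 - t) * Jplus m := by
  have hcd : ContDiff ℝ (⊤ : ℕ∞) (fun x : ℝ => γ (1 - x)) :=
    hγ.comp (contDiff_const.sub contDiff_id)
  ext i j
  have h1 := iteratedDeriv_mulVec A (fun x => γ (1 - x)) hcd (j : ℕ) t
  have h2 := iteratedDeriv_comp_one_sub (j : ℕ) γ t
  simp only [Wmat, Matrix.of_apply, Jplus, Matrix.mul_diagonal, h1, h2]
  simp [Matrix.mulVec, Matrix.mul_apply, dotProduct, Finset.sum_mul]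
  ring_nf

end Aux

theorem stmt14 (n : ℕ) (hn : 1 ≤ n) (γ : ℝ → Fin (n+1) → ℝ) (hγ : ContDiff ℝ (⊤ : ℕ∞) γ)
    (hconv : PosLocConv γ) (M : Matrix (Fin (n+1)) (Fin (n+1)) ℝ)
    (hM : Mᵀ * M = 1) (hMdet : M.det = 1)
    (F : ℝ → Matrix (Fin (n+1)) (Fin (n+1)) ℝ) (hF : IsFrenet γ F) :
    PosLocConv (fun t => (Jplus (n+1) * M).mulVec (γ (1 - t))) ∧
      IsFrenet (fun t => (Jplus (n+1) * M).mulVec (γ (1 - t)))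
        (fun t => Jplus (n+1) * M * F (1 - t) * Jplus (n+1)) ∧
      (F 0 = 1 → M = (F 1)ᵀ →
        Jplus (n+1) * M * F 1 * Jplus (n+1) = 1 ∧
        Jplus (n+1) * M * F 0 * Jplus (n+1) = Jplus (n+1) * (F 1)ᵀ * Jplus (n+1)) := by

  have hJM : (Jplus (n+1) * M)ᵀ * (Jplus (n+1) * M) = 1 := orth_mul (Jplus_orth _) hM
  have frame : ∀ t ∈ Set.Icc (0:ℝ) 1,
      IsFrameAt (fun x => (Jplus (n+1) * M).mulVec (γ (1 - x))) t
        (Jplus (n+1) * M * F (1 - t) * Jplus (n+1)) ∧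
      0 < Wronskian (fun x => (Jplus (n+1) * M).mulVec (γ (1 - x))) t := by
    intro t ht
    have ht' : (1 - t) ∈ Set.Icc (0:ℝ) 1 := ⟨by linarith [ht.2], by linarith [ht.1]⟩
    obtain ⟨horth, hdet, R, hR, hWeq⟩ := hF (1 - t) ht'
    have hW : Wmat (fun x => (Jplus (n+1) * M).mulVec (γ (1 - x))) t =
        (Jplus (n+1) * M) * Wmat γ (1 - t) * Jplus (n+1) := Wmat_TR _ γ hγ t
    have hWfac : Wmat (fun x => (Jplus (n+1) * M).mulVec (γ (1 - x))) t =
        (Jplus (n+1) * M * F (1 - t) * Jplus (n+1)) * (Jplus (n+1) * R * Jplus (n+1)) := by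
      rw [hW, hWeq]
      have hJJ : Jplus (n+1) * (Jplus (n+1) * (R * Jplus (n+1))) = R * Jplus (n+1) := by
        rw [← Matrix.mul_assoc, Jplus_sq, Matrix.one_mul]
      simp only [Matrix.mul_assoc, hJJ]
    refine ⟨⟨orth_mul (orth_mul hJM horth) (Jplus_orth _), ?_,
      ⟨Jplus (n+1) * R * Jplus (n+1), isUpperPos_conj hR, hWfac⟩⟩, ?_⟩
    · rw [Matrix.det_mul, Matrix.det_mul, Matrix.det_mul, hMdet, hdet]
      have := Jplus_det_sq (n+1); nlinarith
    · have hpos := hconv (1 - t) ht'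
      unfold Wronskian at hpos ⊢
      rw [hW, Matrix.det_mul, Matrix.det_mul, Matrix.det_mul, hMdet]
      have := Jplus_det_sq (n+1); nlinarith
  refine ⟨fun t ht => (frame t ht).2, fun t ht => (frame t ht).1, ?_⟩
  intro hF0 hM1
  have horth1 : (F 1)ᵀ * F 1 = 1 := (hF 1 ⟨by norm_num, le_refl 1⟩).1
  constructor
  · rw [hM1, Matrix.mul_assoc (Jplus (n+1)) (F 1)ᵀ (F 1), horth1, Matrix.mul_one, Jplus_sq]
  · rw [hF0, Matrix.mul_one, hM1]

end
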